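/- Let X be a topological space, A ⊆ X a set that is both Fσ and Gδ in X, and g : X \ A → A a continuous map. Define φ : X → X by φ(x) = x for x ∈ A and φ(x) = g(x) for x ∈ X \ A. Then φ is piecewise continuous: there is an increasing sequence (Hₙ) of closed subsets of X with ⋃ₙ Hₙ = X such that the restriction of φ to each Hₙ is continuous. -/

import Mathlib

open Set Filter Topology

def IsFSigma {X : Type*} [TopologicalSpace X] (s : Set X) : Prop :=
  ∃ F : ℕ → Set X, (∀ n, IsClosed (F n)) ∧ s = ⋃ n, F n

def FirstBorelClass {X Y : Type*} [TopologicalSpace X] [TopologicalSpace Y] (f : X → Y) : Prop :=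
  ∀ U : Set Y, IsOpen U → IsFSigma (f ⁻¹' U)

lemma continuousOn_union_of_isClosed {X Y : Type*} [TopologicalSpace X] [TopologicalSpace Y]
    {f : X → Y} {s t : Set X} (hs : IsClosed s) (ht : IsClosed t)
    (hfs : ContinuousOn f s) (hft : ContinuousOn f t) : ContinuousOn f (s ∪ t) := by
  intro x hx
  have h1 : ContinuousWithinAt f s x := by
    by_cases hxs : x ∈ s
    · exact hfs x hxs
    · exact continuousWithinAt_of_notMem_closure (by rwa [hs.closure_eq])
  have h2 : ContinuousWithinAt f t x := by
    by_cases hxt : x ∈ t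
    · exact hft x hxt
    · exact continuousWithinAt_of_notMem_closure (by rwa [ht.closure_eq])
  exact h1.union h2

lemma isClosed_accumulate {X : Type*} [TopologicalSpace X] {F : ℕ → Set X}
    (hF : ∀ n, IsClosed (F n)) (n : ℕ) : IsClosed (accumulate F n) := by
  rw [Set.accumulate_def]
  exact (Set.finite_Iic n).isClosed_biUnion fun i _ => hF i

theorem retraction_piecewise_continuous {X : Type*} [TopologicalSpace X] (A : Set X)
    (hFσ : IsFSigma A) (hGδ : IsGδ A)
    (g : X → X) (hg : ContinuousOn g Aᶜ) (hgA : MapsTo g Aᶜ A)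
    (φ : X → X) (hφ₁ : ∀ x ∈ A, φ x = x) (hφ₂ : ∀ x ∉ A, φ x = g x) :
    ∃ H : ℕ → Set X, Monotone H ∧ (∀ n, IsClosed (H n)) ∧ (⋃ n, H n) = univ ∧
      ∀ n, ContinuousOn φ (H n) := by
  obtain ⟨F, hFcl, hFA⟩ := hFσ
  obtain ⟨U, hUo, hUA⟩ := hGδ.eq_iInter_nat
  set G : ℕ → Set X := fun n => (U n)ᶜ with hG
  have hGcl : ∀ n, IsClosed (G n) := fun n => (hUo n).isClosed_compl
  have hGAc : Aᶜ = ⋃ n, G n := by rw [hUA, compl_iInter]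
  refine ⟨fun n => accumulate F n ∪ accumulate G n, ?_, ?_, ?_, ?_⟩
  · exact fun m n hmn =>
      union_subset_union (monotone_accumulate hmn) (monotone_accumulate hmn)
  · exact fun n => (isClosed_accumulate hFcl n).union (isClosed_accumulate hGcl n)
  · apply eq_univ_of_forall
    intro x
    by_cases hx : x ∈ A
    · obtain ⟨n, hn⟩ := mem_iUnion.1 (hFA ▸ hx : x ∈ ⋃ n, F n)
      exact mem_iUnion.2 ⟨n, Or.inl (subset_accumulate hn)⟩
    · obtain ⟨n, hn⟩ := mem_iUnion.1 (hGAc ▸ hx : x ∈ ⋃ n, G n)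
      exact mem_iUnion.2 ⟨n, Or.inr (subset_accumulate hn)⟩
  · intro n
    have hFsub : accumulate F n ⊆ A := by
      rw [hFA, Set.accumulate_def]
      exact iUnion₂_subset fun i _ => subset_iUnion F i
    have hGsub : accumulate G n ⊆ Aᶜ := by
      rw [hGAc, Set.accumulate_def]
      exact iUnion₂_subset fun i _ => subset_iUnion G i
    apply continuousOn_union_of_isClosed (isClosed_accumulate hFcl n)
      (isClosed_accumulate hGcl n)
    · exact continuous_id.continuousOn.congr fun x hx => hφ₁ x (hFsub hx)
    · exact (hg.mono hGsub).congr fun x hx => hφ₂ x (hGsub hx)
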